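/- arXiv:2503.01716 — 3 statements merged into one kernel-verified Lean document; each statement's English description precedes it below -/
import Mathlib

section
/- Let c ∈ ℝ, α > 0, and 0 ≤ s < t. Then the function R(t,s) = c (t−s)^{α−1} E_{α,α}(c (t−s)^α) satisfies the resolvent equation for the fractional kernel G(t,s) = c (t−s)^{α−1} / Γ(α): that is, c (t−s)^{α−1} E_{α,α}(c (t−s)^α) = c (t−s)^{α−1} / Γ(α) + ∫_s^t (c (t−z)^{α−1} / Γ(α)) · c (z−s)^{α−1} E_{α,α}(c (z−s)^α) dz. -/
open MeasureTheory

open Filter Set in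
private lemma gamma_lower {β : ℝ} (hβ0 : 0 < β) (hβ1 : β ≤ 1) {y : ℝ} (hy : 0 < y) :
    y * Real.Gamma y ≤ Real.Gamma (y + β) * (y + β) ^ (1 - β) := by
  have hyβ : 0 < y + β := by linarith
  have hΓ : 0 < Real.Gamma (y + β) := Real.Gamma_pos_of_pos hyβ
  have hΓy : 0 < Real.Gamma y := Real.Gamma_pos_of_pos hy
  have hc := Real.convexOn_log_Gamma.2 (show y + β ∈ Set.Ioi (0:ℝ) from hyβ)
    (show y + β + 1 ∈ Set.Ioi (0:ℝ) by simp; linarith) hβ0.le (by linarith : (0:ℝ) ≤ 1 - β)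
    (by ring)
  simp only [smul_eq_mul, Function.comp_apply] at hc
  have harg : β * (y + β) + (1 - β) * (y + β + 1) = y + 1 := by ring
  rw [harg] at hc
  have h1 : Real.Gamma (y + 1) = y * Real.Gamma y := Real.Gamma_add_one hy.ne'
  have h2 : Real.Gamma (y + β + 1) = (y + β) * Real.Gamma (y + β) :=
    Real.Gamma_add_one hyβ.ne'
  rw [h1, h2, Real.log_mul hyβ.ne' hΓ.ne'] at hc
  have hc' : Real.log (y * Real.Gamma y)
      ≤ Real.log (Real.Gamma (y + β)) + (1 - β) * Real.log (y + β) := by nlinarith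
  have := Real.exp_le_exp.mpr hc'
  rwa [Real.exp_log (by positivity), Real.exp_add,
    Real.exp_log hΓ, mul_comm (1-β), ← Real.rpow_def_of_pos hyβ] at this

open Filter Set in
private lemma gamma_ratio_eventually (α K : ℝ) (hα : 0 < α) :
    ∀ᶠ y in atTop, K * Real.Gamma y ≤ Real.Gamma (y + α) := by
  set β := min α 1 with hβ
  have hβ0 : 0 < β := lt_min hα one_pos
  have hβ1 : β ≤ 1 := min_le_right _ _
  filter_upwards [eventually_ge_atTop (2:ℝ),
    (tendsto_rpow_atTop hβ0).eventually (eventually_ge_atTop (2*K))] with y hy2 hyK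
  have hy : 0 < y := by linarith
  have hΓy : 0 < Real.Gamma y := Real.Gamma_pos_of_pos hy
  have key := gamma_lower hβ0 hβ1 hy
  have hyβ : 0 < y + β := by linarith
  have hpow : (y + β) ^ (1 - β) ≤ 2 * y ^ (1 - β) := by
    calc (y + β) ^ (1 - β) ≤ (2*y) ^ (1 - β) :=
          Real.rpow_le_rpow hyβ.le (by linarith) (by linarith)
      _ = 2 ^ (1-β) * y ^ (1-β) := Real.mul_rpow (by norm_num) hy.le
      _ ≤ 2 * y ^ (1-β) := by
          have : (2:ℝ) ^ (1-β) ≤ 2 ^ (1:ℝ) :=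
            Real.rpow_le_rpow_of_exponent_le (by norm_num) (by linarith)
          simpa [Real.rpow_one] using
            mul_le_mul_of_nonneg_right this (Real.rpow_nonneg hy.le _)
  have hK : K * (y + β) ^ (1 - β) ≤ y := by
    calc K * (y + β) ^ (1 - β) ≤ (y ^ β / 2) * (2 * y ^ (1-β)) := by
          apply mul_le_mul (by linarith) hpow (Real.rpow_nonneg hyβ.le _)
          positivity
      _ = y ^ β * y ^ (1-β) := by ring
      _ = y := by rw [← Real.rpow_add hy]; norm_num
  have step1 : K * Real.Gamma y ≤ Real.Gamma (y + β) := by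
    have h3 : K * Real.Gamma y * (y + β) ^ (1 - β)
        = (K * (y + β) ^ (1 - β)) * Real.Gamma y := by ring
    have h4 : (K * (y + β) ^ (1 - β)) * Real.Gamma y ≤ y * Real.Gamma y :=
      mul_le_mul_of_nonneg_right hK hΓy.le
    have h5 : K * Real.Gamma y * (y + β) ^ (1 - β)
        ≤ Real.Gamma (y + β) * (y + β) ^ (1 - β) := by
      rw [h3]; exact h4.trans key
    exact le_of_mul_le_mul_right h5 (Real.rpow_pos_of_pos hyβ _)
  refine step1.trans ?_
  have : y + β ≤ y + α := by simp [hβ]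
  exact Real.Gamma_strictMonoOn_Ici.monotoneOn (by simp only [mem_Ici]; linarith)
    (by simp only [mem_Ici]; linarith) this

open Filter Set in
private lemma ml_summable {u α γ : ℝ} (d : ℝ) (hu : 0 < u) (hα : 0 < α) (hγ : 0 < γ) :
    Summable (fun n : ℕ => d ^ n * u ^ ((n:ℝ) * α) / Real.Gamma ((n:ℝ) * α + γ)) := by
  apply summable_of_ratio_norm_eventually_le (r := 1/2) (by norm_num)
  have ht : Tendsto (fun n : ℕ => (n:ℝ) * α + γ) atTop atTop :=
    tendsto_atTop_add_const_right atTop γ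
      (tendsto_natCast_atTop_atTop.atTop_mul_const hα)
  filter_upwards [ht.eventually (gamma_ratio_eventually α (2 * (|d| * u ^ α)) hα)] with n hn
  have hA : 0 < Real.Gamma ((n:ℝ) * α + γ) := Real.Gamma_pos_of_pos (by positivity)
  have hB : 0 < Real.Gamma ((n:ℝ) * α + γ + α) := Real.Gamma_pos_of_pos (by positivity)
  have e1 : ((n+1 : ℕ):ℝ) * α = (n:ℝ) * α + α := by push_cast; ring
  have e2 : u ^ ((n:ℝ) * α + α) = u ^ ((n:ℝ)*α) * u ^ α := Real.rpow_add hu _ _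
  simp only [norm_div, norm_mul, norm_pow, Real.norm_eq_abs, e1,
    abs_of_pos (Real.rpow_pos_of_pos hu _), abs_of_pos hA,
    abs_of_pos (show (0:ℝ) < Real.Gamma ((n:ℝ)*α + α + γ) from
      Real.Gamma_pos_of_pos (by positivity))]
  have e3 : (n:ℝ) * α + α + γ = (n:ℝ) * α + γ + α := by ring
  rw [e3, e2, mul_div_assoc', div_le_div_iff₀ hB hA, pow_succ]
  nlinarith [mul_le_mul_of_nonneg_left hn (show (0:ℝ) ≤ |d| ^ n * u ^ ((n:ℝ)*α) by positivity)]

open Filter Set intervalIntegral in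
private lemma beta_eqOn {a b : ℝ} :
    ∀ x ∈ Icc (0:ℝ) 1,
      (((x ^ (a-1) * (1-x) ^ (b-1) : ℝ)) : ℂ)
        = (x:ℂ) ^ ((a:ℂ)-1) * ((1:ℂ)-(x:ℂ)) ^ ((b:ℂ)-1) := by
  intro x hx
  rw [Complex.ofReal_mul, Complex.ofReal_cpow hx.1, Complex.ofReal_cpow (by linarith [hx.2])]
  push_cast
  ring_nf

open Filter Set intervalIntegral in
private lemma betaIntegrable01 {a b : ℝ} (ha : 0 < a) (hb : 0 < b) :
    IntervalIntegrable (fun x : ℝ => x ^ (a-1) * (1-x) ^ (b-1)) volume 0 1 := by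
  have h := Complex.betaIntegral_convergent (u := (a:ℂ)) (v := (b:ℂ)) (by simpa) (by simpa)
  rw [intervalIntegrable_iff_integrableOn_Ioc_of_le zero_le_one] at h ⊢
  have h2 : IntegrableOn (fun x : ℝ =>
      RCLike.re ((x:ℂ) ^ ((a:ℂ)-1) * ((1:ℂ)-(x:ℂ)) ^ ((b:ℂ)-1))) (Ioc 0 1) volume := h.re
  refine IntegrableOn.congr_fun h2 (fun x hx => ?_) measurableSet_Ioc
  have := beta_eqOn (a := a) (b := b) x ⟨hx.1.le, hx.2⟩
  simp only [← this, Complex.ofReal_re, RCLike.re_to_complex]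

open Filter Set intervalIntegral in
private lemma betaIntegral01 {a b : ℝ} (ha : 0 < a) (hb : 0 < b) :
    ∫ x in (0:ℝ)..1, x ^ (a-1) * (1-x) ^ (b-1)
      = Real.Gamma a * Real.Gamma b / Real.Gamma (a+b) := by
  have h := Complex.Gamma_mul_Gamma_eq_betaIntegral
    (s := (a:ℂ)) (t := (b:ℂ)) (by simpa) (by simpa)
  rw [Complex.betaIntegral] at h
  rw [intervalIntegral.integral_congr (g := fun x : ℝ =>
      ((x ^ (a-1) * (1-x) ^ (b-1) : ℝ) : ℂ)) (by
        rw [uIcc_of_le zero_le_one]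
        exact fun x hx => (beta_eqOn x hx).symm)] at h
  rw [intervalIntegral.integral_ofReal] at h
  rw [← Complex.ofReal_add, Complex.Gamma_ofReal, Complex.Gamma_ofReal,
    Complex.Gamma_ofReal, ← Complex.ofReal_mul, ← Complex.ofReal_mul] at h
  have h' := Complex.ofReal_injective h
  have hΓ : Real.Gamma (a+b) ≠ 0 := (Real.Gamma_pos_of_pos (by linarith)).ne'
  field_simp [h']
  linear_combination h'.symm

open Filter Set intervalIntegral in
private lemma beta_shift_int {s t a b : ℝ} (hst : s < t) (ha : 0 < a) (hb : 0 < b) :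
    IntegrableOn (fun z => (t - z) ^ (a-1) * (z - s) ^ (b-1)) (Ioc s t) volume := by
  have hu : 0 < t - s := sub_pos.mpr hst
  have h0 : IntervalIntegrable (fun x : ℝ => x ^ (b-1) * (1-x) ^ (a-1)) volume 0 1 :=
    betaIntegrable01 hb ha
  have h1 := h0.comp_mul_left (c := (t - s)⁻¹)
  rw [show (0:ℝ) / (t-s)⁻¹ = 0 by simp, show (1:ℝ) / (t-s)⁻¹ = t - s by field_simp] at h1
  have h2 := h1.comp_add_right (-s)
  rw [show (0:ℝ) - (-s) = s by ring, show (t - s) - (-s) = t by ring] at h2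
  rw [intervalIntegrable_iff_integrableOn_Ioc_of_le hst.le] at h2
  have h3 := h2.const_mul ((t-s) ^ (a-1) * (t-s) ^ (b-1))
  refine IntegrableOn.congr_fun h3 (fun z hz => ?_) measurableSet_Ioc
  have hzs : 0 ≤ z - s := by linarith [hz.1]
  have htz : 0 ≤ t - z := by linarith [hz.2]
  have e1 : (t-s)⁻¹ * (z + -s) = (z - s) * (t - s)⁻¹ := by ring
  have e2 : 1 - (t-s)⁻¹ * (z + -s) = (t - z) * (t - s)⁻¹ := by field_simp; ring
  rw [e2, e1, Real.mul_rpow hzs (by positivity), Real.mul_rpow htz (by positivity),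
    Real.inv_rpow hu.le, Real.inv_rpow hu.le]
  have n1 : (t-s) ^ (a-1) ≠ 0 := (Real.rpow_pos_of_pos hu _).ne'
  have n2 : (t-s) ^ (b-1) ≠ 0 := (Real.rpow_pos_of_pos hu _).ne'
  field_simp

open Filter Set intervalIntegral in
private lemma beta_shift {s t a b : ℝ} (hst : s < t) (ha : 0 < a) (hb : 0 < b) :
    (∫ z in s..t, (t - z) ^ (a-1) * (z - s) ^ (b-1))
      = (t - s) ^ (a+b-1) * (Real.Gamma a * Real.Gamma b / Real.Gamma (a+b)) := by
  have hu : 0 < t - s := sub_pos.mpr hst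
  have key := intervalIntegral.smul_integral_comp_mul_add
    (a := (0:ℝ)) (b := 1) (fun z => (t - z) ^ (a-1) * (z - s) ^ (b-1)) (t - s) s
  rw [show (t-s) * 0 + s = s by ring, show (t-s) * 1 + s = t by ring] at key
  rw [← key]
  have : ∀ x ∈ uIcc (0:ℝ) 1,
      (t - ((t-s) * x + s)) ^ (a-1) * (((t-s) * x + s) - s) ^ (b-1)
        = ((t-s)^(a-1) * (t-s)^(b-1)) * ((1-x) ^ (a-1) * x ^ (b-1)) := by
    intro x hx
    rw [uIcc_of_le zero_le_one] at hx
    have e1 : t - ((t-s) * x + s) = (t-s) * (1-x) := by ring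
    have e2 : ((t-s) * x + s) - s = (t-s) * x := by ring
    rw [e1, e2, Real.mul_rpow hu.le (by linarith [hx.2]), Real.mul_rpow hu.le hx.1]
    ring
  rw [intervalIntegral.integral_congr this, intervalIntegral.integral_const_mul]
  have : (∫ x in (0:ℝ)..1, (1-x) ^ (a-1) * x ^ (b-1))
      = Real.Gamma a * Real.Gamma b / Real.Gamma (a+b) := by
    rw [show (fun x : ℝ => (1-x) ^ (a-1) * x ^ (b-1)) = fun x : ℝ => x ^ (b-1) * (1-x) ^ (a-1) by
      funext x; ring]
    rw [betaIntegral01 hb ha, add_comm b a, mul_comm (Real.Gamma b)]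
  rw [this, smul_eq_mul]
  rw [show a+b-1 = 1 + ((a-1)+(b-1)) by ring, Real.rpow_add hu, Real.rpow_add hu,
    Real.rpow_one]
  ring

/-- The two-parameter Mittag-Leffler function `E_{β,γ}(x) = ∑_{n=0}^∞ x^n / Γ(nβ + γ)`. -/
noncomputable def mittagLeffler (β γ x : ℝ) : ℝ :=
  ∑' n : ℕ, x ^ n / Real.Gamma (n * β + γ)

/-- The function `R(t,s) = c (t−s)^{α−1} E_{α,α}(c (t−s)^α)` satisfies the resolvent
equation for the fractional kernel `G(t,s) = c (t−s)^{α−1} / Γ(α)`: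
`R = G + G ⋆ R` (the ⋆-product reducing to an integral over `[s,t]`). -/
theorem fractionalKernel_resolvent_eq (c α s t : ℝ) (hα : 0 < α)
    (hs : 0 ≤ s) (hst : s < t) :
    c * (t - s) ^ (α - 1) * mittagLeffler α α (c * (t - s) ^ α)
      = c * (t - s) ^ (α - 1) / Real.Gamma α
        + ∫ z in s..t, (c * (t - z) ^ (α - 1) / Real.Gamma α)
            * (c * (z - s) ^ (α - 1) * mittagLeffler α α (c * (z - s) ^ α)) := by
  have hu : 0 < t - s := sub_pos.mpr hst
  have hΓα : 0 < Real.Gamma α := Real.Gamma_pos_of_pos hα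
  have hβ : ∀ n : ℕ, (0:ℝ) < ((n:ℝ)+1) * α := fun n => by positivity
  have hΓβ : ∀ n : ℕ, 0 < Real.Gamma (((n:ℝ)+1)*α) := fun n => Real.Gamma_pos_of_pos (hβ n)
  -- termwise identity
  have key : ∀ (x : ℝ), 0 < x → ∀ n : ℕ,
      c * x ^ (α-1) * ((c * x ^ α) ^ n / Real.Gamma ((n:ℝ) * α + α))
        = c ^ (n+1) * x ^ (((n:ℝ)+1) * α - 1) / Real.Gamma (((n:ℝ)+1) * α) := by
    intro x hx n
    rw [mul_pow, ← Real.rpow_natCast (x ^ α) n, ← Real.rpow_mul hx.le,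
      show (((n:ℝ)+1) * α - 1) = (α - 1) + α * (n:ℝ) by ring,
      Real.rpow_add hx, show (((n:ℝ)+1) * α) = (n:ℝ) * α + α by ring, pow_succ]
    ring
  -- Mittag-Leffler expansion
  have hLexp : ∀ (x : ℝ), 0 < x →
      c * x ^ (α-1) * mittagLeffler α α (c * x ^ α)
        = ∑' n : ℕ, c ^ (n+1) * x ^ (((n:ℝ)+1) * α - 1) / Real.Gamma (((n:ℝ)+1) * α) := by
    intro x hx
    rw [mittagLeffler, ← tsum_mul_left]
    exact tsum_congr fun n => key x hx n
  -- summability of the expansion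
  have hFs : Summable (fun n : ℕ =>
      c ^ (n+1) * (t-s) ^ (((n:ℝ)+1) * α - 1) / Real.Gamma (((n:ℝ)+1) * α)) := by
    have h := (ml_summable (d := c) hu hα hα).mul_left (c * (t-s) ^ (α-1))
    refine h.congr fun n => ?_
    rw [show (((n:ℝ)+1) * α - 1) = (α - 1) + (n:ℝ) * α by ring, Real.rpow_add hu,
      show (((n:ℝ)+1) * α) = (n:ℝ) * α + α by ring, pow_succ]
    ring
  -- the summand functions of the integral
  set h : ℕ → ℝ → ℝ := fun n z => (c^(n+2) / (Real.Gamma α * Real.Gamma (((n:ℝ)+1)*α))) *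
      ((t - z) ^ (α-1) * (z - s) ^ (((n:ℝ)+1)*α - 1)) with hh
  have hcongr : ∀ z ∈ Set.Ioc s t,
      (c * (t-z)^(α-1) / Real.Gamma α) * (c * (z-s)^(α-1) * mittagLeffler α α (c * (z-s)^α))
        = ∑' n : ℕ, h n z := by
    intro z hz
    have hzs : 0 < z - s := sub_pos.mpr hz.1
    rw [hLexp (z-s) hzs, ← tsum_mul_left]
    refine tsum_congr fun n => ?_
    rw [hh]
    have := (hΓβ n).ne'
    field_simp
    ring
  have hInt : ∀ n : ℕ, Integrable (h n) (volume.restrict (Set.Ioc s t)) := fun n =>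
    (beta_shift_int hst hα (hβ n)).const_mul _
  have hval : ∀ n : ℕ, (∫ z in Set.Ioc s t, ((t - z) ^ (α-1) * (z - s) ^ (((n:ℝ)+1)*α - 1)))
      = (t-s) ^ (((n:ℝ)+2)*α - 1)
        * (Real.Gamma α * Real.Gamma (((n:ℝ)+1)*α) / Real.Gamma (((n:ℝ)+2)*α)) := by
    intro n
    rw [← intervalIntegral.integral_of_le hst.le, beta_shift hst hα (hβ n),
      show α + ((n:ℝ)+1)*α - 1 = ((n:ℝ)+2)*α - 1 by ring,
      show α + ((n:ℝ)+1)*α = ((n:ℝ)+2)*α by ring]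
  have hnorm : ∀ n : ℕ, (∫ z in Set.Ioc s t, ‖h n z‖)
      = (|c|^(n+2) / (Real.Gamma α * Real.Gamma (((n:ℝ)+1)*α)))
        * ((t-s) ^ (((n:ℝ)+2)*α - 1)
          * (Real.Gamma α * Real.Gamma (((n:ℝ)+1)*α) / Real.Gamma (((n:ℝ)+2)*α))) := by
    intro n
    rw [← hval n, ← integral_const_mul]
    refine setIntegral_congr_fun measurableSet_Ioc (fun z hz => ?_)
    have hzs : 0 ≤ z - s := by linarith [hz.1]
    have htz : 0 ≤ t - z := by linarith [hz.2]
    simp only [hh, Real.norm_eq_abs, abs_mul, abs_div, abs_pow,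
      abs_of_nonneg (Real.rpow_nonneg hzs _), abs_of_nonneg (Real.rpow_nonneg htz _),
      abs_of_pos hΓα, abs_of_pos (hΓβ n)]
  have hsum : Summable (fun n : ℕ => ∫ z in Set.Ioc s t, ‖h n z‖) := by
    have base := (ml_summable (d := |c|) hu hα
      (show (0:ℝ) < 2*α by positivity)).mul_left (|c|^2 * (t-s) ^ (2*α - 1))
    refine base.congr fun n => ?_
    rw [hnorm n,
      show (((n:ℝ)+2)*α - 1) = (2*α - 1) + (n:ℝ)*α by ring, Real.rpow_add hu,
      show ((n:ℝ)*α + 2*α) = ((n:ℝ)+2)*α by ring]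
    have h1 := (hΓβ n).ne'
    have h2 : Real.Gamma (((n:ℝ)+2)*α) ≠ 0 :=
      (Real.Gamma_pos_of_pos (by positivity)).ne'
    field_simp
    rw [show |c| ^ (n+2) = |c| ^ n * c ^ 2 by rw [pow_add, sq_abs]]
    ring_nf; rw [sq_abs]; ring
  -- evaluate the integral
  have hI : (∫ z in s..t, (c * (t - z) ^ (α - 1) / Real.Gamma α)
            * (c * (z - s) ^ (α - 1) * mittagLeffler α α (c * (z - s) ^ α)))
      = ∑' n : ℕ, c ^ (n+2) * (t-s) ^ (((n:ℝ)+2) * α - 1) / Real.Gamma (((n:ℝ)+2) * α) := by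
    rw [intervalIntegral.integral_of_le hst.le,
      setIntegral_congr_fun measurableSet_Ioc hcongr,
      ← integral_tsum_of_summable_integral_norm hInt hsum]
    refine tsum_congr fun n => ?_
    rw [hh]
    simp only
    rw [integral_const_mul, hval n]
    have h1 := (hΓβ n).ne'
    have h2 : Real.Gamma (((n:ℝ)+2)*α) ≠ 0 :=
      (Real.Gamma_pos_of_pos (by positivity)).ne'
    field_simp
  rw [hLexp (t-s) hu, hI, hFs.tsum_eq_zero_add]
  congr 1
  · norm_num
  · refine tsum_congr fun n => ?_
    push_cast
    rw [show ((n:ℝ)+1+1) = (n:ℝ)+2 by ring, show n+1+1 = n+2 from rfl]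
end

section
/- Fix T > 0 and H ∈ (0,1), and define the fractional kernel G(t,s) = 1_{s<t} (t−s)^{H−1/2} for real t, s. Then G is a Volterra kernel of continuous and bounded type in L² on [0,T]: (i) G(t,s) = 0 for s ≥ t; (ii) sup_{t ∈ [0,T]} ∫_0^T (|G(t,s)|² + |G(s,t)|²) ds < ∞ (indeed this supremum is at most T^{2H}/H); and (iii) for every u ∈ [0,T], ∫_0^T |G(u+h,s) − G(u,s)|² ds → 0 as h → 0. -/
open MeasureTheory Filter

/-- The fractional kernel `G(t,s) = 1_{s<t} (t−s)^{H−1/2}`, defined for all real arguments. -/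
noncomputable def fracKernel (H t s : ℝ) : ℝ :=
  if s < t then (t - s) ^ (H - 1/2) else 0

namespace FracKernelAux

variable {H : ℝ}

lemma fracKernel_nonneg (H t s : ℝ) : 0 ≤ fracKernel H t s := by
  unfold fracKernel
  split_ifs with h
  · exact Real.rpow_nonneg (by linarith) _
  · exact le_refl _

lemma fracKernel_of_le (H t s : ℝ) (h : t ≤ s) : fracKernel H t s = 0 := by
  unfold fracKernel
  exact if_neg (not_lt.mpr h)

lemma meas_right (H t : ℝ) : Measurable (fun s => fracKernel H t s) := by
  unfold fracKernel
  exact Measurable.ite measurableSet_Iio ((measurable_id.const_sub t).pow_const _) measurable_const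

lemma meas_left (H t : ℝ) : Measurable (fun s => fracKernel H s t) := by
  unfold fracKernel
  exact Measurable.ite measurableSet_Ioi ((measurable_id.sub_const t).pow_const _) measurable_const

lemma sq_rpow (hH : H ∈ Set.Ioo (0:ℝ) 1) {x : ℝ} (hx : 0 ≤ x) :
    (x ^ (H - 1/2)) ^ 2 = x ^ (2*H - 1) := by
  have h : (2*H - 1) = (H - 1/2) * ((2:ℕ):ℝ) := by push_cast; ring
  rw [h, Real.rpow_mul hx, Real.rpow_natCast]

lemma sq_fracKernel_right (hH : H ∈ Set.Ioo (0:ℝ) 1) (t s : ℝ) :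
    fracKernel H t s ^ 2 = Set.indicator (Set.Iio t) (fun s => (t - s) ^ (2*H - 1)) s := by
  unfold fracKernel
  by_cases h : s < t
  · rw [if_pos h, Set.indicator_of_mem (by exact h)]
    exact sq_rpow hH (by linarith)
  · rw [if_neg h, Set.indicator_of_notMem (by exact h)]
    ring

lemma sq_fracKernel_left (hH : H ∈ Set.Ioo (0:ℝ) 1) (t s : ℝ) :
    fracKernel H s t ^ 2 = Set.indicator (Set.Ioi t) (fun s => (s - t) ^ (2*H - 1)) s := by
  unfold fracKernel
  by_cases h : t < s
  · rw [if_pos h, Set.indicator_of_mem (by exact h)]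
    exact sq_rpow hH (by linarith)
  · rw [if_neg h, Set.indicator_of_notMem (by exact h)]
    ring

lemma II_pow_sub_left (hH : H ∈ Set.Ioo (0:ℝ) 1) (d e f : ℝ) :
    IntervalIntegrable (fun s => (d - s) ^ (2*H - 1)) volume e f := by
  have h := (intervalIntegral.intervalIntegrable_rpow' (a := d - e) (b := d - f)
    (show (-1:ℝ) < 2*H - 1 by linarith [hH.1])).comp_sub_left d
  simpa using h

lemma II_pow_sub_right (hH : H ∈ Set.Ioo (0:ℝ) 1) (t e f : ℝ) :
    IntervalIntegrable (fun s => (s - t) ^ (2*H - 1)) volume e f := by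
  have h := (intervalIntegral.intervalIntegrable_rpow' (a := e - t) (b := f - t)
    (show (-1:ℝ) < 2*H - 1 by linarith [hH.1])).comp_sub_right t
  simpa using h

lemma II_indicator {S : Set ℝ} (hS : MeasurableSet S) {g : ℝ → ℝ} {e f : ℝ}
    (hg : IntervalIntegrable g volume e f) : IntervalIntegrable (S.indicator g) volume e f :=
  ⟨hg.1.indicator hS, hg.2.indicator hS⟩

lemma II_sq_right (hH : H ∈ Set.Ioo (0:ℝ) 1) (t e f : ℝ) :
    IntervalIntegrable (fun s => fracKernel H t s ^ 2) volume e f := by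
  have : (fun s => fracKernel H t s ^ 2)
      = Set.indicator (Set.Iio t) (fun s => (t - s) ^ (2*H - 1)) := by
    funext s; exact sq_fracKernel_right hH t s
  rw [this]
  exact II_indicator measurableSet_Iio (II_pow_sub_left hH t e f)

lemma II_sq_left (hH : H ∈ Set.Ioo (0:ℝ) 1) (t e f : ℝ) :
    IntervalIntegrable (fun s => fracKernel H s t ^ 2) volume e f := by
  have : (fun s => fracKernel H s t ^ 2)
      = Set.indicator (Set.Ioi t) (fun s => (s - t) ^ (2*H - 1)) := by
    funext s; exact sq_fracKernel_left hH t s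
  rw [this]
  exact II_indicator measurableSet_Ioi (II_pow_sub_right hH t e f)

lemma II_sq_diff (hH : H ∈ Set.Ioo (0:ℝ) 1) (a b e f : ℝ) :
    IntervalIntegrable (fun s => (fracKernel H b s - fracKernel H a s) ^ 2) volume e f := by
  refine IntervalIntegrable.mono_fun'
    (((II_sq_right hH b e f).add (II_sq_right hH a e f)).const_mul 2) ?_ ?_
  · exact (((meas_right H b).sub (meas_right H a)).pow_const 2).aestronglyMeasurable
  · refine Filter.Eventually.of_forall (fun s => ?_)
    have h1 : ‖(fracKernel H b s - fracKernel H a s) ^ 2‖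
        = (fracKernel H b s - fracKernel H a s) ^ 2 := by
      rw [Real.norm_eq_abs, abs_of_nonneg (sq_nonneg _)]
    show ‖(fracKernel H b s - fracKernel H a s) ^ 2‖ ≤ 2 * (fracKernel H b s ^ 2 + fracKernel H a s ^ 2)
    rw [h1]
    nlinarith [sq_nonneg (fracKernel H b s + fracKernel H a s)]

lemma integral_pow_sub_left (hH : H ∈ Set.Ioo (0:ℝ) 1) (c d e : ℝ) :
    ∫ s in c..d, (e - s) ^ (2*H - 1) = ((e - c) ^ (2*H) - (e - d) ^ (2*H)) / (2*H) := by
  rw [intervalIntegral.integral_comp_sub_left (fun x => x ^ (2*H - 1)) e,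
    integral_rpow (Or.inl (by linarith [hH.1]))]
  have h : 2*H - 1 + 1 = 2*H := by ring
  rw [h]

lemma integral_pow_sub_right (hH : H ∈ Set.Ioo (0:ℝ) 1) (c d t : ℝ) :
    ∫ s in c..d, (s - t) ^ (2*H - 1) = ((d - t) ^ (2*H) - (c - t) ^ (2*H)) / (2*H) := by
  rw [intervalIntegral.integral_comp_sub_right (fun x => x ^ (2*H - 1)) t,
    integral_rpow (Or.inl (by linarith [hH.1]))]
  have h : 2*H - 1 + 1 = 2*H := by ring
  rw [h]


lemma int_right (hH : H ∈ Set.Ioo (0:ℝ) 1) {t T : ℝ} (ht0 : 0 ≤ t) (htT : t ≤ T) :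
    ∫ s in (0:ℝ)..T, fracKernel H t s ^ 2 ≤ t ^ (2*H) / (2*H) := by
  have h2H : (0:ℝ) < 2*H := by linarith [hH.1]
  have e1 : (∫ s in (0:ℝ)..t, fracKernel H t s ^ 2) + (∫ s in t..T, fracKernel H t s ^ 2)
      = ∫ s in (0:ℝ)..T, fracKernel H t s ^ 2 :=
    intervalIntegral.integral_add_adjacent_intervals (II_sq_right hH t 0 t)
      (II_sq_right hH t t T)
  have e2 : ∫ s in t..T, fracKernel H t s ^ 2 = 0 := by
    have heq : Set.EqOn (fun s => fracKernel H t s ^ 2) (fun _ => (0:ℝ)) (Set.uIcc t T) := by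
      intro s hs
      rw [Set.uIcc_of_le htT] at hs
      simp [fracKernel_of_le H t s hs.1]
    rw [intervalIntegral.integral_congr heq]
    simp
  have e3 : ∫ s in (0:ℝ)..t, fracKernel H t s ^ 2 ≤ ∫ s in (0:ℝ)..t, (t - s) ^ (2*H-1) := by
    refine intervalIntegral.integral_mono_on ht0 (II_sq_right hH t 0 t)
      (II_pow_sub_left hH t 0 t) ?_
    intro s hs
    rw [sq_fracKernel_right hH t s]
    by_cases h : s < t
    · rw [Set.indicator_of_mem (Set.mem_Iio.mpr h)]
    · rw [Set.indicator_of_notMem (fun hm => h (Set.mem_Iio.mp hm))]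
      exact Real.rpow_nonneg (by linarith [hs.2]) _
  have e4 := integral_pow_sub_left hH 0 t t
  rw [sub_self, Real.zero_rpow (ne_of_gt h2H), sub_zero, sub_zero] at e4
  linarith

lemma int_left (hH : H ∈ Set.Ioo (0:ℝ) 1) {t T : ℝ} (ht0 : 0 ≤ t) (htT : t ≤ T) :
    ∫ s in (0:ℝ)..T, fracKernel H s t ^ 2 ≤ (T - t) ^ (2*H) / (2*H) := by
  have h2H : (0:ℝ) < 2*H := by linarith [hH.1]
  have e1 : (∫ s in (0:ℝ)..t, fracKernel H s t ^ 2) + (∫ s in t..T, fracKernel H s t ^ 2)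
      = ∫ s in (0:ℝ)..T, fracKernel H s t ^ 2 :=
    intervalIntegral.integral_add_adjacent_intervals (II_sq_left hH t 0 t)
      (II_sq_left hH t t T)
  have e2 : ∫ s in (0:ℝ)..t, fracKernel H s t ^ 2 = 0 := by
    have heq : Set.EqOn (fun s => fracKernel H s t ^ 2) (fun _ => (0:ℝ)) (Set.uIcc 0 t) := by
      intro s hs
      rw [Set.uIcc_of_le ht0] at hs
      simp [fracKernel_of_le H s t hs.2]
    rw [intervalIntegral.integral_congr heq]
    simp
  have e3 : ∫ s in t..T, fracKernel H s t ^ 2 ≤ ∫ s in t..T, (s - t) ^ (2*H-1) := by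
    refine intervalIntegral.integral_mono_on htT (II_sq_left hH t t T)
      (II_pow_sub_right hH t t T) ?_
    intro s hs
    rw [sq_fracKernel_left hH t s]
    by_cases h : t < s
    · rw [Set.indicator_of_mem (Set.mem_Ioi.mpr h)]
    · rw [Set.indicator_of_notMem (fun hm => h (Set.mem_Ioi.mp hm))]
      exact Real.rpow_nonneg (by linarith [hs.1]) _
  have e4 := integral_pow_sub_right hH t T t
  rw [sub_self, Real.zero_rpow (ne_of_gt h2H), sub_zero] at e4
  linarith


lemma key (hH : H ∈ Set.Ioo (0:ℝ) 1) {T a b : ℝ} (ha : 0 ≤ a) (hab : a ≤ b) (hT : 0 ≤ T) :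
    ∫ s in (0:ℝ)..T, |fracKernel H b s - fracKernel H a s| ^ 2
      ≤ (b ^ (2*H) - a ^ (2*H) + 2 * (b - a) ^ (2*H)) / (2*H) := by
  have hH1 := hH.1
  have h2H : (0:ℝ) < 2*H := by linarith
  set D : ℝ → ℝ := fun s => (fracKernel H b s - fracKernel H a s) ^ 2 with hD
  have habs : (fun s => |fracKernel H b s - fracKernel H a s| ^ 2) = D := by
    funext s; rw [sq_abs]
  rw [habs]
  have hb0 : 0 ≤ b := le_trans ha hab
  set M := max T b with hM
  have hTM : T ≤ M := le_max_left _ _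
  have hbM : b ≤ M := le_max_right _ _
  have hDnn : ∀ s, 0 ≤ D s := fun s => sq_nonneg _
  have hDI : ∀ e f : ℝ, IntervalIntegrable D volume e f := fun e f => II_sq_diff hH a b e f
  have step1 : ∫ s in (0:ℝ)..M, D s ≥ ∫ s in (0:ℝ)..T, D s :=
    intervalIntegral.integral_mono_interval le_rfl hT hTM
      (Filter.Eventually.of_forall fun s => hDnn s) (hDI 0 M)
  have e1 : (∫ s in (0:ℝ)..a, D s) + (∫ s in a..b, D s) = ∫ s in (0:ℝ)..b, D s :=
    intervalIntegral.integral_add_adjacent_intervals (hDI 0 a) (hDI a b)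
  have e2 : (∫ s in (0:ℝ)..b, D s) + (∫ s in b..M, D s) = ∫ s in (0:ℝ)..M, D s :=
    intervalIntegral.integral_add_adjacent_intervals (hDI 0 b) (hDI b M)
  have step3 : ∫ s in b..M, D s = 0 := by
    have heq : Set.EqOn D (fun _ => (0:ℝ)) (Set.uIcc b M) := by
      intro s hs
      rw [Set.uIcc_of_le hbM] at hs
      have h1 : fracKernel H b s = 0 := fracKernel_of_le H b s hs.1
      have h2 : fracKernel H a s = 0 := fracKernel_of_le H a s (le_trans hab hs.1)
      simp [hD, h1, h2]
    rw [intervalIntegral.integral_congr heq]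
    simp
  have step4 : ∫ s in a..b, D s ≤ (b - a) ^ (2*H) / (2*H) := by
    have hmono : ∫ s in a..b, D s ≤ ∫ s in a..b, (b - s) ^ (2*H - 1) := by
      refine intervalIntegral.integral_mono_on hab (hDI a b) (II_pow_sub_left hH b a b) ?_
      intro s hs
      have hka : fracKernel H a s = 0 := fracKernel_of_le H a s hs.1
      have hDs : D s = fracKernel H b s ^ 2 := by simp [hD, hka]
      rw [hDs, sq_fracKernel_right hH b s]
      by_cases h : s < b
      · rw [Set.indicator_of_mem (Set.mem_Iio.mpr h)]
      · rw [Set.indicator_of_notMem (fun hm => h (Set.mem_Iio.mp hm))]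
        exact Real.rpow_nonneg (by linarith [hs.2]) _
    have hval := integral_pow_sub_left hH a b b
    rw [hval, sub_self, Real.zero_rpow (ne_of_gt h2H), sub_zero] at hmono
    exact hmono
  have key0 : ∀ s : ℝ, s < a →
      D s = ((b - s) ^ (H - 1/2) - (a - s) ^ (H - 1/2)) ^ 2 := by
    intro s hsa
    have hsb : s < b := lt_of_lt_of_le hsa hab
    simp only [hD, fracKernel, if_pos hsa, if_pos hsb]
  have hnea : ∀ᵐ s ∂(volume : Measure ℝ), s ≠ a := by
    rw [ae_iff]
    have hset : {s : ℝ | ¬ s ≠ a} = {a} := by ext x; simp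
    rw [hset]
    exact Real.volume_singleton
  have step5 : ∫ s in (0:ℝ)..a, D s
      ≤ (b ^ (2*H) - a ^ (2*H) + (b - a) ^ (2*H)) / (2*H) := by
    rcases le_or_gt (1/2 : ℝ) H with hHhalf | hHhalf
    · have hmono : ∫ s in (0:ℝ)..a, D s
          ≤ ∫ s in (0:ℝ)..a, ((b - s) ^ (2*H-1) - (a - s) ^ (2*H-1)) := by
        refine intervalIntegral.integral_mono_ae_restrict ha (hDI 0 a)
          ((II_pow_sub_left hH b 0 a).sub (II_pow_sub_left hH a 0 a)) ?_
        filter_upwards [ae_restrict_of_ae hnea, ae_restrict_mem measurableSet_Icc]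
          with s hsne hs
        have hsa : s < a := lt_of_le_of_ne hs.2 hsne
        have hs0 : (0:ℝ) ≤ s := hs.1
        rw [key0 s hsa]
        have hx2 : ((b - s) ^ (H - 1/2)) ^ 2 = (b - s) ^ (2*H-1) := sq_rpow hH (by linarith)
        have hy2 : ((a - s) ^ (H - 1/2)) ^ 2 = (a - s) ^ (2*H-1) := sq_rpow hH (by linarith)
        have hyx : (a - s) ^ (H - 1/2) ≤ (b - s) ^ (H - 1/2) :=
          Real.rpow_le_rpow (by linarith) (by linarith) (by linarith)
        have hy0 : (0:ℝ) ≤ (a - s) ^ (H - 1/2) := Real.rpow_nonneg (by linarith) _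
        nlinarith [mul_nonneg hy0 (sub_nonneg.2 hyx)]
      have hcalc : ∫ s in (0:ℝ)..a, ((b - s) ^ (2*H-1) - (a - s) ^ (2*H-1))
          = ((b ^ (2*H) - (b - a) ^ (2*H)) - a ^ (2*H)) / (2*H) := by
        rw [intervalIntegral.integral_sub (II_pow_sub_left hH b 0 a)
          (II_pow_sub_left hH a 0 a), integral_pow_sub_left hH 0 a b,
          integral_pow_sub_left hH 0 a a]
        simp only [sub_zero, sub_self]
        rw [Real.zero_rpow (ne_of_gt h2H)]
        ring
      rw [hcalc] at hmono
      refine le_trans hmono ?_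
      have h1 : 0 ≤ (b - a) ^ (2*H) := Real.rpow_nonneg (by linarith) _
      apply div_le_div_of_nonneg_right ?_ h2H.le
      linarith
    · have hmono : ∫ s in (0:ℝ)..a, D s
          ≤ ∫ s in (0:ℝ)..a, ((a - s) ^ (2*H-1) - (b - s) ^ (2*H-1)) := by
        refine intervalIntegral.integral_mono_ae_restrict ha (hDI 0 a)
          ((II_pow_sub_left hH a 0 a).sub (II_pow_sub_left hH b 0 a)) ?_
        filter_upwards [ae_restrict_of_ae hnea, ae_restrict_mem measurableSet_Icc]
          with s hsne hs
        have hsa : s < a := lt_of_le_of_ne hs.2 hsne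
        have hs0 : (0:ℝ) ≤ s := hs.1
        rw [key0 s hsa]
        have hx2 : ((b - s) ^ (H - 1/2)) ^ 2 = (b - s) ^ (2*H-1) := sq_rpow hH (by linarith)
        have hy2 : ((a - s) ^ (H - 1/2)) ^ 2 = (a - s) ^ (2*H-1) := sq_rpow hH (by linarith)
        have hxy : (b - s) ^ (H - 1/2) ≤ (a - s) ^ (H - 1/2) :=
          Real.rpow_le_rpow_of_nonpos (by linarith) (by linarith) (by linarith)
        have hx0 : (0:ℝ) ≤ (b - s) ^ (H - 1/2) := Real.rpow_nonneg (by linarith) _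
        nlinarith [mul_nonneg hx0 (sub_nonneg.2 hxy)]
      have hcalc : ∫ s in (0:ℝ)..a, ((a - s) ^ (2*H-1) - (b - s) ^ (2*H-1))
          = (a ^ (2*H) - (b ^ (2*H) - (b - a) ^ (2*H))) / (2*H) := by
        rw [intervalIntegral.integral_sub (II_pow_sub_left hH a 0 a)
          (II_pow_sub_left hH b 0 a), integral_pow_sub_left hH 0 a b,
          integral_pow_sub_left hH 0 a a]
        simp only [sub_zero, sub_self]
        rw [Real.zero_rpow (ne_of_gt h2H)]
        ring
      rw [hcalc] at hmono
      refine le_trans hmono ?_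
      have h1 : a ^ (2*H) ≤ b ^ (2*H) := Real.rpow_le_rpow ha hab h2H.le
      apply div_le_div_of_nonneg_right ?_ h2H.le
      linarith
  have hsum : (b ^ (2*H) - a ^ (2*H) + (b - a) ^ (2*H)) / (2*H) + (b - a) ^ (2*H) / (2*H)
      = (b ^ (2*H) - a ^ (2*H) + 2 * (b - a) ^ (2*H)) / (2*H) := by
    rw [← add_div]
    congr 1
    ring
  linarith

end FracKernelAux

/-- For `T > 0` and `H ∈ (0,1)`, the fractional kernel `G(t,s) = 1_{s<t}(t−s)^{H−1/2}` is a
Volterra kernel of continuous and bounded type in `L²` on `[0,T]`: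
(i) it vanishes for `s ≥ t`;
(ii) `sup_{t ∈ [0,T]} ∫_0^T (|G(t,s)|² + |G(s,t)|²) ds ≤ T^{2H}/H < ∞`;
(iii) for every `u ∈ [0,T]`, `∫_0^T |G(u+h,s) − G(u,s)|² ds → 0` as `h → 0`. -/
theorem fracKernel_volterra_L2 (T H : ℝ) (hT : 0 < T) (hH : H ∈ Set.Ioo (0 : ℝ) 1) :
    (∀ t s : ℝ, t ≤ s → fracKernel H t s = 0) ∧
    (∀ t ∈ Set.Icc (0 : ℝ) T,
      (∫ s in (0:ℝ)..T, (|fracKernel H t s| ^ 2 + |fracKernel H s t| ^ 2))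
        ≤ T ^ (2 * H) / H) ∧
    (∀ u ∈ Set.Icc (0 : ℝ) T,
      Tendsto (fun h : ℝ => ∫ s in (0:ℝ)..T, |fracKernel H (u + h) s - fracKernel H u s| ^ 2)
        (nhds 0) (nhds 0)) := by
  obtain ⟨hH0, hH1⟩ := hH
  have hHmem : H ∈ Set.Ioo (0:ℝ) 1 := ⟨hH0, hH1⟩
  have h2H : (0:ℝ) < 2*H := by linarith
  refine ⟨fun t s h => FracKernelAux.fracKernel_of_le H t s h, ?_, ?_⟩
  · intro t ht
    obtain ⟨ht0, htT⟩ := ht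
    simp only [sq_abs]
    rw [intervalIntegral.integral_add (FracKernelAux.II_sq_right hHmem t 0 T)
      (FracKernelAux.II_sq_left hHmem t 0 T)]
    have i1 := FracKernelAux.int_right hHmem ht0 htT
    have i2 := FracKernelAux.int_left hHmem ht0 htT
    have m1 : t ^ (2*H) ≤ T ^ (2*H) := Real.rpow_le_rpow ht0 htT h2H.le
    have m2 : (T - t) ^ (2*H) ≤ T ^ (2*H) :=
      Real.rpow_le_rpow (by linarith) (by linarith) h2H.le
    have hfin : T ^ (2*H) / (2*H) + T ^ (2*H) / (2*H) = T ^ (2*H) / H := by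
      rw [← add_div, show T ^ (2*H) + T ^ (2*H) = 2 * T ^ (2*H) by ring]
      exact mul_div_mul_left _ _ two_ne_zero
    have hd1 : t ^ (2*H) / (2*H) ≤ T ^ (2*H) / (2*H) :=
      div_le_div_of_nonneg_right m1 h2H.le
    have hd2 : (T - t) ^ (2*H) / (2*H) ≤ T ^ (2*H) / (2*H) :=
      div_le_div_of_nonneg_right m2 h2H.le
    linarith
  · intro u hu
    obtain ⟨hu0, huT⟩ := hu
    set A : ℝ → ℝ := fun h => max (min u (u + h)) 0 with hA
    set B : ℝ → ℝ := fun h => max u (u + h) with hB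
    have hA0 : ∀ h, 0 ≤ A h := fun h => le_max_right _ _
    have hAB : ∀ h, A h ≤ B h := fun h =>
      max_le ((min_le_left _ _).trans (le_max_left _ _)) (le_trans hu0 (le_max_left _ _))
    have hIeq : ∀ h : ℝ, (∫ s in (0:ℝ)..T, |fracKernel H (u + h) s - fracKernel H u s| ^ 2)
        = ∫ s in (0:ℝ)..T, |fracKernel H (B h) s - fracKernel H (A h) s| ^ 2 := by
      intro h
      apply intervalIntegral.integral_congr
      intro s hs
      rw [Set.uIcc_of_le hT.le] at hs
      dsimp only
      rcases le_total u (u + h) with hc | hc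
      · have hAu : A h = u := by
          rw [hA]; simp only; rw [min_eq_left hc, max_eq_left hu0]
        have hBu : B h = u + h := by rw [hB]; simp only; rw [max_eq_right hc]
        rw [hAu, hBu]
      · have hBu : B h = u := by rw [hB]; simp only; rw [max_eq_left hc]
        rcases le_or_gt 0 (u + h) with hc2 | hc2
        · have hAu : A h = u + h := by
            rw [hA]; simp only; rw [min_eq_right hc, max_eq_left hc2]
          rw [hAu, hBu, abs_sub_comm]
        · have hAu : A h = 0 := by
            rw [hA]; simp only; rw [min_eq_right hc, max_eq_right hc2.le]
          have hk1 : fracKernel H (u + h) s = 0 :=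
            FracKernelAux.fracKernel_of_le H _ s (by linarith [hs.1])
          have hk2 : fracKernel H 0 s = 0 := FracKernelAux.fracKernel_of_le H 0 s hs.1
          rw [hAu, hBu, hk1, hk2, zero_sub, abs_neg, sub_zero]
    have hbound : ∀ h : ℝ,
        (∫ s in (0:ℝ)..T, |fracKernel H (u + h) s - fracKernel H u s| ^ 2)
          ≤ ((B h) ^ (2*H) - (A h) ^ (2*H) + 2 * (B h - A h) ^ (2*H)) / (2*H) := by
      intro h
      rw [hIeq h]
      exact FracKernelAux.key hHmem (hA0 h) (hAB h) hT.le
    have hnonneg : ∀ h : ℝ,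
        0 ≤ ∫ s in (0:ℝ)..T, |fracKernel H (u + h) s - fracKernel H u s| ^ 2 :=
      fun h => intervalIntegral.integral_nonneg hT.le (fun s _ => by positivity)
    have hAt : Tendsto A (nhds 0) (nhds u) := by
      have hc : Continuous A :=
        (continuous_const.min (continuous_const.add continuous_id)).max continuous_const
      have h0 : A 0 = u := by rw [hA]; simp only; rw [add_zero, min_self, max_eq_left hu0]
      simpa [h0] using hc.tendsto 0
    have hBt : Tendsto B (nhds 0) (nhds u) := by
      have hc : Continuous B := continuous_const.max (continuous_const.add continuous_id)
      have h0 : B 0 = u := by rw [hB]; simp only; rw [add_zero, max_self]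
      simpa [h0] using hc.tendsto 0
    have c1 : Tendsto (fun h => (B h) ^ (2*H)) (nhds 0) (nhds (u ^ (2*H))) :=
      ((Real.continuousAt_rpow_const u (2*H) (Or.inr h2H.le)).tendsto).comp hBt
    have c2 : Tendsto (fun h => (A h) ^ (2*H)) (nhds 0) (nhds (u ^ (2*H))) :=
      ((Real.continuousAt_rpow_const u (2*H) (Or.inr h2H.le)).tendsto).comp hAt
    have c3 : Tendsto (fun h => (B h - A h) ^ (2*H)) (nhds 0) (nhds ((0:ℝ) ^ (2*H))) := by
      have hsub : Tendsto (fun h => B h - A h) (nhds 0) (nhds 0) := by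
        simpa using hBt.sub hAt
      exact ((Real.continuousAt_rpow_const 0 (2*H) (Or.inr h2H.le)).tendsto).comp hsub
    have hBnd : Tendsto
        (fun h => ((B h) ^ (2*H) - (A h) ^ (2*H) + 2 * (B h - A h) ^ (2*H)) / (2*H))
        (nhds 0) (nhds 0) := by
      have hT2 := ((c1.sub c2).add (c3.const_mul 2)).div_const (2*H)
      have hlim : (u ^ (2*H) - u ^ (2*H) + 2 * (0:ℝ) ^ (2*H)) / (2*H) = 0 := by
        rw [Real.zero_rpow (ne_of_gt h2H)]; ring
      rw [hlim] at hT2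
      exact hT2
    exact squeeze_zero hnonneg hbound hBnd
end

section
/- Let α > 0, ε > 0, and 0 < t ≤ u be real numbers. Then ∫_0^t (t − s + ε)^{α−1} (u − s + ε)^{α−1} ds = t (t+ε)^{α−1} (u+ε)^{α−1} · F₁(1, 1−α, 1−α, 2; t/(u+ε), t/(t+ε)), where the double series defining F₁ converges absolutely since both arguments t/(u+ε) and t/(t+ε) lie in [0,1). In particular, the discretized covariance matrix entries Σ_0^{i,j;N} = η_ν² ∫_0^T G_ν(t_{i−1},s) G_ν(t_{j−1},s) ds of the shifted fractional kernel G_ν(t,s) = 1_{s<t}(t−s+ε)^{α−1}/Γ(α) admit, for 1 ≤ i ≤ j, the closed form (η_ν² t_{i−1} (t_{i−1}+ε)^{α−1} (t_{j−1}+ε)^{α−1} / Γ(α)²) · F₁(1, 1−α, 1−α, 2; t_{i−1}/(t_{j−1}+ε), t_{i−1}/(t_{i−1}+ε)). -/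
open MeasureTheory

/-- The general term of the double series defining the Appell hypergeometric function
`F₁(a,b,b',c;x,y)`: `((a)_{m+n} (b)_m (b')_n) / ((c)_{m+n} m! n!) x^m y^n`, where
`(q)_k` is the rising Pochhammer symbol. -/
noncomputable def appellF1Term (a b b' c x y : ℝ) (p : ℕ × ℕ) : ℝ :=
  ((ascPochhammer ℝ (p.1 + p.2)).eval a * (ascPochhammer ℝ p.1).eval b *
      (ascPochhammer ℝ p.2).eval b') /
    ((ascPochhammer ℝ (p.1 + p.2)).eval c * (p.1.factorial : ℝ) * (p.2.factorial : ℝ)) *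
    x ^ p.1 * y ^ p.2

/-- The Appell hypergeometric function of the first kind,
`F₁(a,b,b',c;x,y) = ∑_{m,n≥0} ((a)_{m+n} (b)_m (b')_n)/((c)_{m+n} m! n!) x^m y^n`. -/
noncomputable def appellF1 (a b b' c x y : ℝ) : ℝ :=
  ∑' p : ℕ × ℕ, appellF1Term a b b' c x y p

noncomputable def binCoef (β : ℝ) (m : ℕ) : ℝ := (ascPochhammer ℝ m).eval β / m.factorial

lemma binCoef_zero (β : ℝ) : binCoef β 0 = 1 := by simp [binCoef]

lemma binCoef_succ (β : ℝ) (m : ℕ) :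
    binCoef β (m + 1) * (m + 1) = binCoef β m * (β + m) := by
  have h : (ascPochhammer ℝ (m+1)).eval β = (ascPochhammer ℝ m).eval β * (β + m) := by
    simp [ascPochhammer_succ_right, Polynomial.eval_mul]
  have hm : (m.factorial : ℝ) ≠ 0 := Nat.cast_ne_zero.2 m.factorial_ne_zero
  unfold binCoef
  rw [h, Nat.factorial_succ]
  push_cast
  have hm1 : ((m:ℝ)+1) ≠ 0 := by positivity
  rw [mul_comm ((m:ℝ)+1), ← div_div, div_mul_cancel₀ _ hm1]
  ring

lemma abs_binCoef_succ (β : ℝ) (m : ℕ) :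
    |binCoef β (m + 1)| * (m + 1) = |binCoef β m| * |β + m| := by
  have := binCoef_succ β m
  have h1 : |binCoef β (m+1) * (m+1)| = |binCoef β (m+1)| * (m+1) := by
    rw [abs_mul]; congr 1; exact abs_of_nonneg (by positivity)
  rw [← h1, this, abs_mul]

lemma summable_weight (β ρ : ℝ) (hρ0 : 0 ≤ ρ) (hρ1 : ρ < 1) :
    Summable (fun m : ℕ => ((m : ℝ) + 1) * |binCoef β m| * ρ ^ m) := by
  set r : ℝ := (1 + ρ) / 2 with hr
  have hr1 : r < 1 := by rw [hr]; linarith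
  apply summable_of_ratio_norm_eventually_le hr1
  obtain ⟨N, hN⟩ := exists_nat_ge (4 * |β| / (1 - ρ))
  filter_upwards [Filter.eventually_atTop.2 ⟨N, fun m hm => hm⟩] with m hm
  have hm' : (N : ℝ) ≤ m := Nat.cast_le.2 hm
  have hb : 0 ≤ |β| := abs_nonneg β
  have hβm : |β + m| ≤ |β| + m := by
    calc |β + m| ≤ |β| + |(m:ℝ)| := abs_add_le _ _
      _ = |β| + m := by rw [Nat.abs_cast]
  have h1ρ : 0 < 1 - ρ := by linarith
  have h4 : 4 * |β| ≤ (1 - ρ) * ((m:ℝ) + 1) := by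
    have h5 : 4 * |β| / (1 - ρ) ≤ (m : ℝ) := le_trans hN hm'
    rw [div_le_iff₀ h1ρ] at h5
    nlinarith
  -- key inequality : (m+2) * |β+m| * ρ ≤ r * (m+1)^2
  have hkey : ((m : ℝ) + 2) * |β + m| * ρ ≤ r * ((m : ℝ) + 1) ^ 2 := by
    have hA : ((m:ℝ) + 2) * |β + m| * ρ ≤ ((m:ℝ)+2) * (|β| + m) * ρ :=
      mul_le_mul_of_nonneg_right (mul_le_mul_of_nonneg_left hβm (by positivity)) hρ0
    have hB : ρ * (|β| * ((m:ℝ)+2)) ≤ |β| * ((m:ℝ)+2) :=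
      mul_le_of_le_one_left (by positivity) (le_of_lt hρ1)
    have hC : 4 * |β| * ((m:ℝ)+1) ≤ (1-ρ) * (((m:ℝ)+1) * ((m:ℝ)+1)) := by
      have h6 := mul_le_mul_of_nonneg_right h4 (by positivity : (0:ℝ) ≤ (m:ℝ)+1)
      nlinarith [h6]
    rw [hr]; nlinarith
  -- now the ratio bound
  have ecast : ((m+1 : ℕ) : ℝ) = (m:ℝ) + 1 := by push_cast; ring
  rw [ecast]
  have e1 : ‖((m : ℝ) + 1 + 1) * |binCoef β (m+1)| * ρ ^ (m+1)‖
      = ((m:ℝ) + 2) / ((m:ℝ)+1) * |β + m| * ρ * (|binCoef β m| * ρ ^ m) := by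
    rw [Real.norm_eq_abs, abs_of_nonneg (by positivity)]
    have h2 : |binCoef β (m+1)| = |binCoef β m| * |β + m| / ((m:ℝ)+1) := by
      rw [← abs_binCoef_succ β m]; field_simp
    rw [h2, pow_succ]
    field_simp
    ring
  have h7 : (0:ℝ) ≤ ((m:ℝ)+1) * |binCoef β m| * ρ ^ m := by positivity
  rw [e1, Real.norm_eq_abs (((m:ℝ)+1) * |binCoef β m| * ρ ^ m), abs_of_nonneg h7]
  have hfrac : ((m:ℝ) + 2) / ((m:ℝ)+1) * |β + m| * ρ ≤ r * ((m:ℝ)+1) := by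
    rw [div_mul_eq_mul_div, div_mul_eq_mul_div, div_le_iff₀ (by positivity : (0:ℝ) < (m:ℝ)+1)]
    calc ((m:ℝ)+2) * |β+m| * ρ ≤ r * ((m:ℝ)+1)^2 := hkey
      _ = r * ((m:ℝ)+1) * ((m:ℝ)+1) := by ring
  calc ((m:ℝ) + 2) / ((m:ℝ)+1) * |β + m| * ρ * (|binCoef β m| * ρ ^ m)
      ≤ r * ((m:ℝ)+1) * (|binCoef β m| * ρ ^ m) := by
        apply mul_le_mul_of_nonneg_right hfrac (by positivity)
    _ = r * (((m:ℝ)+1) * |binCoef β m| * ρ ^ m) := by ring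

lemma summable_bin (β : ℝ) {w ρ : ℝ} (hwρ : |w| ≤ ρ) (hρ1 : ρ < 1) :
    Summable (fun m : ℕ => binCoef β m * w ^ m) := by
  have hρ0 : 0 ≤ ρ := le_trans (abs_nonneg w) hwρ
  apply Summable.of_norm_bounded (summable_weight β ρ hρ0 hρ1)
  intro m
  rw [Real.norm_eq_abs, abs_mul, abs_pow]
  calc |binCoef β m| * |w| ^ m ≤ |binCoef β m| * ρ ^ m := by
        apply mul_le_mul_of_nonneg_left (pow_le_pow_left₀ (abs_nonneg w) hwρ m) (abs_nonneg _)
    _ ≤ ((m:ℝ)+1) * |binCoef β m| * ρ ^ m := by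
        nlinarith [mul_nonneg (mul_nonneg (Nat.cast_nonneg (α := ℝ) m) (abs_nonneg (binCoef β m))) (pow_nonneg hρ0 m)]

theorem hasSum_binomial (β : ℝ) {z : ℝ} (h0 : 0 ≤ z) (h1 : z < 1) :
    HasSum (fun m : ℕ => binCoef β m * z ^ m) ((1 - z) ^ (-β)) := by
  rcases eq_or_lt_of_le h0 with hz0 | hz0
  · subst hz0
    simp only [sub_zero, Real.one_rpow]
    have : (fun m : ℕ => binCoef β m * (0:ℝ) ^ m)
        = fun m : ℕ => if m = 0 then 1 else 0 := by
      funext m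
      cases m with
      | zero => simp [binCoef_zero]
      | succ k => simp [zero_pow]
    rw [this]
    simpa using hasSum_ite_eq (0 : ℕ) (1:ℝ)
  -- now 0 < z
  set ρ : ℝ := (1 + z) / 2 with hρdef
  have hρ0 : 0 < ρ := by rw [hρdef]; linarith
  have hρ1 : ρ < 1 := by rw [hρdef]; linarith
  have hzρ : z < ρ := by rw [hρdef]; linarith
  set T : Set ℝ := Set.Ioo (-ρ) ρ with hTdef
  have hT : IsOpen T := isOpen_Ioo
  have h'T : IsPreconnected T := (convex_Ioo _ _).isPreconnected
  have habsρ : ∀ y ∈ T, |y| ≤ ρ := by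
    intro y hy
    rw [abs_le]; exact ⟨le_of_lt hy.1, le_of_lt hy.2⟩
  set u : ℕ → ℝ := fun m => (1/ρ) * (((m:ℝ)+1) * |binCoef β m| * ρ ^ m) with hudef
  have hu : Summable u := (summable_weight β ρ (le_of_lt hρ0) hρ1).mul_left _
  set g : ℕ → ℝ → ℝ := fun m y => binCoef β m * y ^ m with hgdef
  set g' : ℕ → ℝ → ℝ := fun m y => binCoef β m * ((m:ℝ) * y ^ (m-1)) with hg'def
  have hg : ∀ m y, HasDerivAt (g m) (g' m y) y := fun m y => (hasDerivAt_pow m y).const_mul _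
  have hg' : ∀ m y, y ∈ T → ‖g' m y‖ ≤ u m := by
    intro m y hy
    rw [hg'def, Real.norm_eq_abs, abs_mul, abs_mul, abs_pow, Nat.abs_cast, hudef]
    have hyρ := habsρ y hy
    have hya := abs_nonneg y
    cases m with
    | zero => simp; positivity
    | succ k =>
      simp only [Nat.add_sub_cancel]
      have hpow : |y| ^ k ≤ ρ ^ k := pow_le_pow_left₀ hya hyρ k
      have e : (1/ρ) * (((k+1:ℕ):ℝ)+1) * ρ ^ (k+1) = (((k:ℝ)+2)) * ρ ^ k := by
        rw [pow_succ]; push_cast; field_simp; ring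
      calc |binCoef β (k+1)| * (((k+1:ℕ):ℝ) * |y| ^ k)
          ≤ |binCoef β (k+1)| * ((((k+1:ℕ):ℝ)+1) * ρ ^ k) := by
            apply mul_le_mul_of_nonneg_left _ (abs_nonneg _)
            push_cast
            nlinarith [pow_nonneg (le_of_lt hρ0) k]
        _ = (1/ρ) * ((((k+1:ℕ):ℝ)+1) * |binCoef β (k+1)| * ρ ^ (k+1)) := by
            field_simp; ring
  have h0T : (0:ℝ) ∈ T := by constructor <;> simp [hρ0]
  have hg0 : Summable fun m => g m 0 :=
    summable_bin β (by rw [abs_zero]; exact le_of_lt hρ0) hρ1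
  set F : ℝ → ℝ := fun y => ∑' m, g m y with hFdef
  have hF : ∀ y ∈ T, HasDerivAt F (∑' m, g' m y) y := fun y hy =>
    hasDerivAt_tsum_of_isPreconnected hu hT h'T (fun m y _ => hg m y) hg' h0T hg0 hy
  -- the ODE : (1 - y) * D y = β * F y on T
  have hODE : ∀ y ∈ T, (1 - y) * (∑' m, g' m y) = β * F y := by
    intro y hy
    have hsumD : Summable fun m => g' m y :=
      Summable.of_norm_bounded hu (fun m => hg' m y hy)
    have hD : HasSum (fun m => g' m y) (∑' m, g' m y) := hsumD.hasSum
    have hS : HasSum (fun m => binCoef β m * y ^ m) (F y) :=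
      (summable_bin β (habsρ y hy) hρ1).hasSum
    set D := ∑' m, g' m y with hDdef
    -- shifted series
    have hshift : HasSum (fun m => g' (m+1) y) D := by
      have h9 : HasSum (fun m => g' (m+1) y) (D - g' 0 y) :=
        (hasSum_nat_add_iff (f := fun m => g' m y) 1).2 (by simpa using hD)
      simpa [hg'def] using h9
    have hshift' : HasSum (fun m => binCoef β m * (β + m) * y ^ m) D := by
      have e : (fun m : ℕ => binCoef β m * (β + m) * y ^ m) = fun m => g' (m+1) y := by
        funext m
        rw [hg'def]
        simp only [Nat.add_sub_cancel]
        have h5 := binCoef_succ β m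
        push_cast
        linear_combination (-(y ^ m)) * h5
      rw [e]; exact hshift
    have hβS : HasSum (fun m => β * (binCoef β m * y ^ m)) (β * F y) := hS.mul_left β
    have hyD : HasSum (fun m => binCoef β m * (m:ℝ) * y ^ m) (y * D) := by
      have h2 : HasSum (fun m => y * g' m y) (y * D) := hD.mul_left y
      have e : (fun m : ℕ => binCoef β m * (m:ℝ) * y ^ m) = fun m => y * g' m y := by
        funext m
        rw [hg'def]
        cases m with
        | zero => simp
        | succ k =>
          simp only [Nat.add_sub_cancel]
          rw [pow_succ]
          push_cast
          ring
      rw [e]; exact h2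
    have hsum2 : HasSum (fun m => binCoef β m * (β + m) * y ^ m) (β * F y + y * D) := by
      convert hβS.add hyD using 2 with m
      ring
    have hDeq : D = β * F y + y * D := hshift'.unique hsum2
    linarith [hDeq]
  -- G := (1-y)^β * F y is constant on [0, z]
  set G : ℝ → ℝ := fun y => (1 - y) ^ β * F y with hGdef
  have hsub : Set.Icc (0:ℝ) z ⊆ T := by
    intro y hy
    rw [hTdef]
    exact ⟨lt_of_lt_of_le (neg_lt_zero.2 hρ0) hy.1, lt_of_le_of_lt hy.2 hzρ⟩
  have hG : ∀ y ∈ T, HasDerivAt G 0 y := by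
    intro y hy
    have hyρ : y < ρ := hy.2
    have h1y : 0 < 1 - y := by linarith
    have hpow : HasDerivAt (fun x : ℝ => (1 - x) ^ β) (β * (1 - y) ^ (β - 1) * (-1)) y := by
      have h := Real.hasDerivAt_rpow_const (x := 1 - y) (p := β) (Or.inl (ne_of_gt h1y))
      have hlin : HasDerivAt (fun x : ℝ => 1 - x) (-1) y := (hasDerivAt_id y).const_sub 1
      exact h.comp y hlin
    have hFy := hF y hy
    have hprod := hpow.mul hFy
    have e : (1 - y) ^ β = (1 - y) ^ (β - 1) * (1 - y) := by
      rw [← Real.rpow_add_one (ne_of_gt h1y) (β - 1)]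
      norm_num
    have hODEy := hODE y hy
    refine hprod.congr_deriv ?_
    rw [e]
    linear_combination ((1 - y) ^ (β - 1)) * hODEy
  have hconst : ∀ x ∈ Set.Icc (0:ℝ) z, G x = G 0 := by
    apply constant_of_derivWithin_zero
    · exact fun y hy => ((hG y (hsub hy)).differentiableAt).differentiableWithinAt
    · intro y hy
      have h2 := (hG y (hsub (Set.Ico_subset_Icc_self hy))).hasDerivWithinAt
        (s := Set.Icc (0:ℝ) z)
      exact h2.derivWithin ((uniqueDiffOn_Icc hz0) y (Set.Ico_subset_Icc_self hy))
  have hGz : G z = G 0 := hconst z (Set.right_mem_Icc.2 (le_of_lt hz0))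
  have hF0 : F 0 = 1 := by
    show (∑' (m : ℕ), g m 0) = 1
    rw [tsum_eq_single 0 ?_]
    · simp [hgdef, binCoef_zero]
    · intro m hm
      rw [hgdef]
      cases m with
      | zero => exact absurd rfl hm
      | succ k => simp [zero_pow]
  have hG0 : G 0 = 1 := by rw [hGdef]; simp [hF0]
  have h1z : 0 < 1 - z := by linarith
  have hβz : (0:ℝ) < (1 - z) ^ β := Real.rpow_pos_of_pos h1z β
  have hFz : F z = (1 - z) ^ (-β) := by
    have hGzval : (1 - z) ^ β * F z = 1 := by
      have h2 : G z = 1 := hGz.trans hG0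
      simpa [hGdef] using h2
    rw [Real.rpow_neg (le_of_lt h1z)]
    field_simp
    linear_combination hGzval
  have hzabs : |z| ≤ ρ := by rw [abs_of_nonneg h0]; exact le_of_lt hzρ
  have hsum := (summable_bin β hzabs hρ1).hasSum
  have hFz' : (∑' (m : ℕ), binCoef β m * z ^ m) = F z := rfl
  rwa [hFz', hFz] at hsum

lemma asc_eval_one (k : ℕ) : (ascPochhammer ℝ k).eval 1 = k.factorial := by
  induction k with
  | zero => simp
  | succ n ih =>
      rw [ascPochhammer_succ_right, Polynomial.eval_mul, ih, Nat.factorial_succ]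
      simp only [Polynomial.eval_add, Polynomial.eval_X, Polynomial.eval_natCast]
      push_cast
      ring

lemma asc_eval_two (k : ℕ) : (ascPochhammer ℝ k).eval 2 = (k+1).factorial := by
  induction k with
  | zero => simp
  | succ n ih =>
      rw [ascPochhammer_succ_right, Polynomial.eval_mul, ih]
      simp only [Polynomial.eval_add, Polynomial.eval_X, Polynomial.eval_natCast]
      rw [Nat.factorial_succ (n+1), Nat.cast_mul, Nat.cast_add, Nat.cast_add, Nat.cast_one]
      ring

lemma appellF1Term_eq (β x y : ℝ) (p : ℕ × ℕ) :
    appellF1Term 1 β β 2 x y p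
      = binCoef β p.1 * binCoef β p.2 * x ^ p.1 * y ^ p.2 / ((p.1:ℝ) + p.2 + 1) := by
  obtain ⟨m, n⟩ := p
  simp only [appellF1Term, binCoef, asc_eval_one, asc_eval_two]
  have h1 : ((m+n).factorial : ℝ) ≠ 0 := Nat.cast_ne_zero.2 (Nat.factorial_ne_zero _)
  have h2 : ((m+n+1).factorial : ℝ) = ((m:ℝ)+n+1) * ((m+n).factorial : ℝ) := by
    rw [Nat.factorial_succ]; push_cast; ring
  have h3 : (m.factorial : ℝ) ≠ 0 := Nat.cast_ne_zero.2 (Nat.factorial_ne_zero _)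
  have h4 : (n.factorial : ℝ) ≠ 0 := Nat.cast_ne_zero.2 (Nat.factorial_ne_zero _)
  have h5 : ((m:ℝ)+n+1) ≠ 0 := by positivity
  rw [h2]
  push_cast
  field_simp

lemma summable_bin_norm (β : ℝ) {w ρ : ℝ} (hwρ : |w| ≤ ρ) (hρ1 : ρ < 1) :
    Summable (fun m : ℕ => ‖binCoef β m * w ^ m‖) := by
  have hρ0 : 0 ≤ ρ := le_trans (abs_nonneg w) hwρ
  apply Summable.of_nonneg_of_le (fun m => norm_nonneg _) _ (summable_weight β ρ hρ0 hρ1)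
  intro m
  rw [Real.norm_eq_abs, abs_mul, abs_pow]
  calc |binCoef β m| * |w| ^ m ≤ |binCoef β m| * ρ ^ m := by
        apply mul_le_mul_of_nonneg_left (pow_le_pow_left₀ (abs_nonneg w) hwρ m) (abs_nonneg _)
    _ ≤ ((m:ℝ)+1) * |binCoef β m| * ρ ^ m := by
        nlinarith [mul_nonneg (mul_nonneg (Nat.cast_nonneg (α := ℝ) m)
          (abs_nonneg (binCoef β m))) (pow_nonneg hρ0 m)]

lemma summable_appellF1Term (β : ℝ) {x y : ℝ} (hx0 : 0 ≤ x) (hx1 : x < 1)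
    (hy0 : 0 ≤ y) (hy1 : y < 1) :
    Summable (fun p : ℕ × ℕ => appellF1Term 1 β β 2 x y p) := by
  have h1 : Summable (fun m : ℕ => ‖binCoef β m * x ^ m‖) :=
    summable_bin_norm β (le_of_eq (abs_of_nonneg hx0)) hx1
  have h2 : Summable (fun m : ℕ => ‖binCoef β m * y ^ m‖) :=
    summable_bin_norm β (le_of_eq (abs_of_nonneg hy0)) hy1
  have hprod : Summable (fun p : ℕ × ℕ =>
      ‖binCoef β p.1 * x ^ p.1‖ * ‖binCoef β p.2 * y ^ p.2‖) :=
    h1.mul_of_nonneg h2 (fun _ => norm_nonneg _) (fun _ => norm_nonneg _)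
  apply Summable.of_norm_bounded hprod
  intro p
  rw [appellF1Term_eq, Real.norm_eq_abs, abs_div]
  have hd : (1:ℝ) ≤ |(p.1:ℝ) + p.2 + 1| := by
    rw [abs_of_pos (by positivity)]
    have := Nat.cast_nonneg (α := ℝ) p.1
    have := Nat.cast_nonneg (α := ℝ) p.2
    linarith
  calc |binCoef β p.1 * binCoef β p.2 * x ^ p.1 * y ^ p.2| / |(p.1:ℝ) + p.2 + 1|
      ≤ |binCoef β p.1 * binCoef β p.2 * x ^ p.1 * y ^ p.2| / 1 := by
        apply div_le_div_of_nonneg_left ?_ ?_ hd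
        · exact abs_nonneg _
        · norm_num
    _ = ‖binCoef β p.1 * x ^ p.1‖ * ‖binCoef β p.2 * y ^ p.2‖ := by
        rw [div_one, Real.norm_eq_abs, Real.norm_eq_abs, ← abs_mul]
        congr 1
        ring

/-- Closed form for the covariance-type integral of the shifted fractional kernel:
for `α > 0`, `ε > 0`, `0 < t ≤ u`,
`∫_0^t (t−s+ε)^{α−1} (u−s+ε)^{α−1} ds
  = t (t+ε)^{α−1} (u+ε)^{α−1} F₁(1, 1−α, 1−α, 2; t/(u+ε), t/(t+ε))`,
the double series defining `F₁` being absolutely convergent since both arguments lie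
in `[0,1)`. -/
theorem shiftedFracKernel_covariance_integral (α ε t u : ℝ) (hα : 0 < α) (hε : 0 < ε)
    (ht : 0 < t) (htu : t ≤ u) :
    Summable (fun p : ℕ × ℕ =>
        appellF1Term 1 (1 - α) (1 - α) 2 (t / (u + ε)) (t / (t + ε)) p) ∧
    (∫ s in (0:ℝ)..t, (t - s + ε) ^ (α - 1) * (u - s + ε) ^ (α - 1))
      = t * (t + ε) ^ (α - 1) * (u + ε) ^ (α - 1) *
          appellF1 1 (1 - α) (1 - α) 2 (t / (u + ε)) (t / (t + ε)) := by
  set A : ℝ := t + ε with hAdef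
  set B : ℝ := u + ε with hBdef
  set β : ℝ := 1 - α with hβdef
  have hA : 0 < A := by rw [hAdef]; linarith
  have hB : 0 < B := by rw [hBdef]; linarith
  have htA : t < A := by rw [hAdef]; linarith
  have htB : t < B := by rw [hBdef]; linarith
  have hβα : -β = α - 1 := by rw [hβdef]; ring
  have hx0 : 0 ≤ t / B := by positivity
  have hx1 : t / B < 1 := (div_lt_one hB).2 htB
  have hy0 : 0 ≤ t / A := by positivity
  have hy1 : t / A < 1 := (div_lt_one hA).2 htA
  refine ⟨summable_appellF1Term β hx0 hx1 hy0 hy1, ?_⟩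
  set C : ℝ := A ^ (α - 1) * B ^ (α - 1) with hCdef
  have hC : 0 < C := by
    rw [hCdef]
    exact mul_pos (Real.rpow_pos_of_pos hA _) (Real.rpow_pos_of_pos hB _)
  set K : ℕ × ℕ → ℝ := fun p =>
    C * binCoef β p.1 * binCoef β p.2 * (B⁻¹) ^ p.1 * (A⁻¹) ^ p.2 with hKdef
  set g : ℕ × ℕ → ℝ → ℝ := fun p s => K p * s ^ (p.1 + p.2) with hgdef
  -- pointwise expansion
  have hpt : ∀ s ∈ Set.Ioc (0:ℝ) t,
      HasSum (fun p => g p s) ((t - s + ε) ^ (α - 1) * (u - s + ε) ^ (α - 1)) := by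
    intro s hs
    obtain ⟨hs0, hst⟩ := hs
    have hsB0 : 0 ≤ s / B := by positivity
    have hsB1 : s / B < 1 := (div_lt_one hB).2 (lt_of_le_of_lt hst htB)
    have hsA0 : 0 ≤ s / A := by positivity
    have hsA1 : s / A < 1 := (div_lt_one hA).2 (lt_of_le_of_lt hst htA)
    have hb1 : HasSum (fun m => binCoef β m * (s/B) ^ m) ((1 - s/B) ^ (α - 1)) := by
      have h := hasSum_binomial β hsB0 hsB1
      rwa [hβα] at h
    have hb2 : HasSum (fun m => binCoef β m * (s/A) ^ m) ((1 - s/A) ^ (α - 1)) := by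
      have h := hasSum_binomial β hsA0 hsA1
      rwa [hβα] at h
    have hn1 : Summable fun m => ‖binCoef β m * (s/B) ^ m‖ :=
      summable_bin_norm β (le_of_eq (abs_of_nonneg hsB0)) hsB1
    have hn2 : Summable fun m => ‖binCoef β m * (s/A) ^ m‖ :=
      summable_bin_norm β (le_of_eq (abs_of_nonneg hsA0)) hsA1
    have hsmul : Summable (fun p : ℕ × ℕ =>
        (binCoef β p.1 * (s/B) ^ p.1) * (binCoef β p.2 * (s/A) ^ p.2)) :=
      summable_mul_of_summable_norm (f := fun m => binCoef β m * (s/B) ^ m)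
        (g := fun m => binCoef β m * (s/A) ^ m) hn1 hn2
    have hmul := (hb1.mul hb2 hsmul).mul_left C
    have efun : (fun p : ℕ × ℕ =>
        C * ((binCoef β p.1 * (s/B) ^ p.1) * (binCoef β p.2 * (s/A) ^ p.2)))
        = fun p => g p s := by
      funext p
      rw [hgdef, hKdef]
      simp only [div_eq_mul_inv, mul_pow, pow_add]
      ring
    have h1A : (0:ℝ) ≤ 1 - s / A := by linarith
    have h1B : (0:ℝ) ≤ 1 - s / B := by linarith
    have eval : C * ((1 - s/B) ^ (α - 1) * (1 - s/A) ^ (α - 1))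
        = (t - s + ε) ^ (α - 1) * (u - s + ε) ^ (α - 1) := by
      have e1 : t - s + ε = A * (1 - s / A) := by
        rw [hAdef]; field_simp; ring
      have e2 : u - s + ε = B * (1 - s / B) := by
        rw [mul_sub, mul_one, mul_div_assoc', mul_div_cancel_left₀ s (ne_of_gt hB), hBdef]; ring
      rw [e1, e2, Real.mul_rpow (le_of_lt hA) h1A, Real.mul_rpow (le_of_lt hB) h1B, hCdef]
      ring
    rw [efun] at hmul
    rw [← eval]
    exact hmul
  -- integrability
  have hInt : ∀ p : ℕ × ℕ, IntegrableOn (g p) (Set.Ioc (0:ℝ) t) := by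
    intro p
    rw [hgdef]
    exact (continuous_const.mul (continuous_pow _)).integrableOn_Ioc
  -- exact values of the integrals
  have hIoc : ∀ p : ℕ × ℕ, ∫ s in Set.Ioc (0:ℝ) t, s ^ (p.1 + p.2)
      = t ^ (p.1 + p.2 + 1) / ((p.1:ℝ) + p.2 + 1) := by
    intro p
    rw [← intervalIntegral.integral_of_le (le_of_lt ht), integral_pow]
    rw [zero_pow (Nat.succ_ne_zero _)]
    push_cast
    ring
  have hIex : ∀ p : ℕ × ℕ, ∫ s in Set.Ioc (0:ℝ) t, g p s
      = K p * (t ^ (p.1 + p.2 + 1) / ((p.1:ℝ) + p.2 + 1)) := by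
    intro p
    have e : (fun s => g p s) = fun s => K p * s ^ (p.1 + p.2) := by
      funext s; rw [hgdef]
    rw [e, MeasureTheory.integral_const_mul, hIoc p]
  have hIno : ∀ p : ℕ × ℕ, ∫ s in Set.Ioc (0:ℝ) t, ‖g p s‖
      = |K p| * (t ^ (p.1 + p.2 + 1) / ((p.1:ℝ) + p.2 + 1)) := by
    intro p
    have e : Set.EqOn (fun s => ‖g p s‖) (fun s => |K p| * s ^ (p.1 + p.2))
        (Set.Ioc (0:ℝ) t) := by
      intro s hs
      simp only [hgdef, Real.norm_eq_abs, abs_mul, abs_pow,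
        abs_of_pos hs.1]
    rw [MeasureTheory.setIntegral_congr_fun measurableSet_Ioc e,
      MeasureTheory.integral_const_mul, hIoc p]
  -- summability of the norm integrals
  have hKval : ∀ p : ℕ × ℕ, |K p| * t ^ (p.1 + p.2 + 1)
      = (t * C) * (‖binCoef β p.1 * (t/B) ^ p.1‖ * ‖binCoef β p.2 * (t/A) ^ p.2‖) := by
    intro p
    rw [hKdef]
    simp only [abs_mul, abs_pow, abs_inv, abs_of_pos hA, abs_of_pos hB, abs_of_pos hC,
      Real.norm_eq_abs, abs_div, abs_of_pos ht]
    rw [div_pow, div_pow, pow_add, pow_succ]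
    field_simp
    have hBp : B ^ p.1 * B⁻¹ ^ p.1 = 1 := by rw [← mul_pow, mul_inv_cancel₀ hB.ne', one_pow]
    have hAp : A ^ p.2 * A⁻¹ ^ p.2 = 1 := by rw [← mul_pow, mul_inv_cancel₀ hA.ne', one_pow]
    rw [one_div, one_div, pow_add]
    linear_combination (|binCoef β p.1| * |binCoef β p.2| * t ^ p.1 * t ^ p.2 * A⁻¹ ^ p.2 * A ^ p.2) * hBp + (|binCoef β p.1| * |binCoef β p.2| * t ^ p.1 * t ^ p.2) * hAp
  have hnormsum : Summable (fun p : ℕ × ℕ => ∫ s in Set.Ioc (0:ℝ) t, ‖g p s‖) := by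
    have h1 : Summable (fun m : ℕ => ‖binCoef β m * (t/B) ^ m‖) :=
      summable_bin_norm β (le_of_eq (abs_of_nonneg hx0)) hx1
    have h2 : Summable (fun m : ℕ => ‖binCoef β m * (t/A) ^ m‖) :=
      summable_bin_norm β (le_of_eq (abs_of_nonneg hy0)) hy1
    have hmaj : Summable (fun p : ℕ × ℕ =>
        (t * C) * (‖binCoef β p.1 * (t/B) ^ p.1‖ * ‖binCoef β p.2 * (t/A) ^ p.2‖)) :=
      (h1.mul_of_nonneg h2 (fun _ => norm_nonneg _) (fun _ => norm_nonneg _)).mul_left _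
    apply Summable.of_nonneg_of_le ?_ ?_ hmaj
    · intro p
      rw [hIno p]
      positivity
    · intro p
      rw [hIno p, ← hKval p]
      have hden : (1:ℝ) ≤ (p.1:ℝ) + p.2 + 1 := by
        have := Nat.cast_nonneg (α := ℝ) p.1
        have := Nat.cast_nonneg (α := ℝ) p.2
        linarith
      calc |K p| * (t ^ (p.1 + p.2 + 1) / ((p.1:ℝ) + p.2 + 1))
          ≤ |K p| * (t ^ (p.1 + p.2 + 1) / 1) := by
            apply mul_le_mul_of_nonneg_left ?_ (abs_nonneg _)
            apply div_le_div_of_nonneg_left (by positivity) one_pos hden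
        _ = |K p| * t ^ (p.1 + p.2 + 1) := by rw [div_one]
  -- interchange
  have key := MeasureTheory.integral_tsum_of_summable_integral_norm hInt hnormsum
  have eint : (∫ s in Set.Ioc (0:ℝ) t, (∑' p : ℕ × ℕ, g p s))
      = ∫ s in Set.Ioc (0:ℝ) t, (t - s + ε) ^ (α - 1) * (u - s + ε) ^ (α - 1) :=
    MeasureTheory.setIntegral_congr_fun measurableSet_Ioc (fun s hs => (hpt s hs).tsum_eq)
  -- identification of the series of integrals
  have eterm : ∀ p : ℕ × ℕ, K p * (t ^ (p.1 + p.2 + 1) / ((p.1:ℝ) + p.2 + 1))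
      = (t * C) * appellF1Term 1 β β 2 (t/B) (t/A) p := by
    intro p
    rw [appellF1Term_eq, hKdef]
    have hden : ((p.1:ℝ) + p.2 + 1) ≠ 0 := by positivity
    rw [div_pow, div_pow, pow_add, pow_succ]
    field_simp
    have hBp : B ^ p.1 * B⁻¹ ^ p.1 = 1 := by rw [← mul_pow, mul_inv_cancel₀ hB.ne', one_pow]
    have hAp : A ^ p.2 * A⁻¹ ^ p.2 = 1 := by rw [← mul_pow, mul_inv_cancel₀ hA.ne', one_pow]
    rw [one_div, one_div, pow_add]
    linear_combination (binCoef β p.1 * binCoef β p.2 * t ^ p.1 * t ^ p.2 * A⁻¹ ^ p.2 * A ^ p.2) * hBp + (binCoef β p.1 * binCoef β p.2 * t ^ p.1 * t ^ p.2) * hAp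
  have lhs : (∑' p : ℕ × ℕ, ∫ s in Set.Ioc (0:ℝ) t, g p s)
      = (t * C) * appellF1 1 β β 2 (t/B) (t/A) := by
    have e : (fun p : ℕ × ℕ => ∫ s in Set.Ioc (0:ℝ) t, g p s)
        = fun p => (t * C) * appellF1Term 1 β β 2 (t/B) (t/A) p := by
      funext p
      rw [hIex p, eterm p]
    rw [e, tsum_mul_left]
    rfl
  rw [intervalIntegral.integral_of_le (le_of_lt ht), ← eint, ← key, lhs, hCdef]
  ring
end
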